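/- The constraint set 𝒫 is a convex subset of L²[0,1] × ℝ^m: if (u, x₀) ∈ 𝒫, (u', x₀') ∈ 𝒫 and α ∈ [0,1], then (α u + (1−α) u', α x₀ + (1−α) x₀') ∈ 𝒫. -/

import Mathlib

open MeasureTheory Set

noncomputable section

/-- One integration from `0`. -/
def Dinv (u : ℝ → ℝ) : ℝ → ℝ := fun x => ∫ s in (0 : ℝ)..x, u s

lemma Dinv_cont {g : ℝ → ℝ} (hg : IntegrableOn g (Icc (0:ℝ) 1)) :
    ContinuousOn (Dinv g) (Icc (0:ℝ) 1) := by
  have : uIcc (0:ℝ) 1 = Icc (0:ℝ) 1 := uIcc_of_le zero_le_one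
  have := intervalIntegral.continuousOn_primitive_interval (a := (0:ℝ)) (b := 1)
    (μ := volume) (f := g) (by rwa [this])
  rwa [uIcc_of_le zero_le_one] at this

lemma iter_combo {u u' : ℝ → ℝ} (hu : IntegrableOn u (Icc (0:ℝ) 1))
    (hu' : IntegrableOn u' (Icc (0:ℝ) 1)) (α β : ℝ) (k : ℕ) :
    IntegrableOn (Dinv^[k] u) (Icc (0:ℝ) 1) ∧ IntegrableOn (Dinv^[k] u') (Icc (0:ℝ) 1) ∧
    ∀ t ∈ Icc (0:ℝ) 1,
      Dinv^[k] (fun s => α * u s + β * u' s) t = α * Dinv^[k] u t + β * Dinv^[k] u' t := by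
  induction k with
  | zero => exact ⟨hu, hu', fun t _ => rfl⟩
  | succ k ih =>
    obtain ⟨h1, h2, h3⟩ := ih
    refine ⟨?_, ?_, ?_⟩
    · rw [Function.iterate_succ_apply']
      exact ((Dinv_cont h1).mono (subset_refl _)).integrableOn_compact isCompact_Icc
    · rw [Function.iterate_succ_apply']
      exact (Dinv_cont h2).integrableOn_compact isCompact_Icc
    · intro t ht
      rw [Function.iterate_succ_apply', Function.iterate_succ_apply',
        Function.iterate_succ_apply']
      have hsub : Icc (0:ℝ) t ⊆ Icc 0 1 := Icc_subset_Icc le_rfl ht.2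
      have i1 : IntervalIntegrable (Dinv^[k] u) volume 0 t := by
        rw [intervalIntegrable_iff_integrableOn_Icc_of_le ht.1]
        exact h1.mono_set hsub
      have i2 : IntervalIntegrable (Dinv^[k] u') volume 0 t := by
        rw [intervalIntegrable_iff_integrableOn_Icc_of_le ht.1]
        exact h2.mono_set hsub
      show (∫ s in (0:ℝ)..t, Dinv^[k] (fun s => α * u s + β * u' s) s)
        = α * (∫ s in (0:ℝ)..t, Dinv^[k] u s) + β * (∫ s in (0:ℝ)..t, Dinv^[k] u' s)
      rw [intervalIntegral.integral_congr (g := fun s => α * Dinv^[k] u s + β * Dinv^[k] u' s)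
        (fun s hs => h3 s (by
          rw [uIcc_of_le ht.1] at hs; exact hsub hs)),
        intervalIntegral.integral_add (i1.const_mul α) (i2.const_mul β),
        intervalIntegral.integral_const_mul, intervalIntegral.integral_const_mul]

/-- The `m`-fold iterated integral operator `D^{-m}`. -/
def DmInv (m : ℕ) (u : ℝ → ℝ) : ℝ → ℝ := Dinv^[m] u

/-- `z_{(u,x₀)}(t) = (D^{-m}u)(t) + θ(t)ᵀ x₀` with
`θ(t) = (1, t, t²/2!, …, t^{m-1}/(m-1)!)ᵀ`. -/
def zfun (m : ℕ) (u : ℝ → ℝ) (x0 : EuclideanSpace ℝ (Fin m)) : ℝ → ℝ :=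
  fun t => DmInv m u t + ∑ j : Fin m, x0 j * t ^ (j : ℕ) / ((j : ℕ).factorial : ℝ)

/-- The exceptional set `𝒩 = {t ∈ [0,1] : f₀^{(m)}(t) = 0}`. -/
def Nset (m : ℕ) (f0 : ℝ → ℝ) : Set ℝ :=
  {s ∈ Icc (0 : ℝ) 1 | iteratedDeriv m f0 s = 0}

/-- Membership in the constraint set `𝒫`:
`u ∈ L²[0,1]`, `‖x₀‖ ≤ μ`, `z_{(u,x₀)}/f₀^{(m)} ≥ ε` on `[0,1] ∖ 𝒩`, and
`(z_{(u,x₀)}/f₀^{(m)})^{-1/(2m)}` Lebesgue integrable on `[0,1] ∖ 𝒩`. -/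
def memP (m : ℕ) (f0 : ℝ → ℝ) (μ ε : ℝ)
    (u : ℝ → ℝ) (x0 : EuclideanSpace ℝ (Fin m)) : Prop :=
  MemLp u 2 (volume.restrict (Icc (0 : ℝ) 1)) ∧
  ‖x0‖ ≤ μ ∧
  (∀ t ∈ Icc (0 : ℝ) 1 \ Nset m f0, ε ≤ zfun m u x0 t / iteratedDeriv m f0 t) ∧
  IntegrableOn
    (fun t => (zfun m u x0 t / iteratedDeriv m f0 t) ^ (-(1 : ℝ) / (2 * m)))
    (Icc (0 : ℝ) 1 \ Nset m f0) volume

/-- The objective functional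
`J(u, x₀) = ∫₀¹ r² u² + L₀ ∫_{[0,1]∖𝒩} r^{1-1/(2m)} (z_{(u,x₀)}/f₀^{(m)})^{-1/(2m)}`. -/
def Jfun (m : ℕ) (r f0 : ℝ → ℝ) (L0 : ℝ)
    (u : ℝ → ℝ) (x0 : EuclideanSpace ℝ (Fin m)) : ℝ :=
  (∫ t in Icc (0 : ℝ) 1, r t ^ 2 * u t ^ 2) +
    L0 * ∫ t in Icc (0 : ℝ) 1 \ Nset m f0,
      r t ^ ((1 : ℝ) - 1 / (2 * m)) *
        (zfun m u x0 t / iteratedDeriv m f0 t) ^ (-(1 : ℝ) / (2 * m))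

/-- the constraint set `𝒫` is convex. -/
theorem P_convex
    (m : ℕ) (hm : 1 ≤ m)
    (f0 : ℝ → ℝ) (hf0 : ContDiff ℝ (2 * m) f0)
    (μ ε : ℝ) (hμ : 0 < μ) (hε : 0 < ε)
    (u u' : ℝ → ℝ) (x0 x0' : EuclideanSpace ℝ (Fin m))
    (hu : memP m f0 μ ε u x0) (hu' : memP m f0 μ ε u' x0')
    (α : ℝ) (hα : α ∈ Icc (0 : ℝ) 1) :
    memP m f0 μ ε (fun t => α * u t + (1 - α) * u' t) (α • x0 + (1 - α) • x0') := by
  obtain ⟨hL2, hnorm, hge, hint⟩ := hu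
  obtain ⟨hL2', hnorm', hge', hint'⟩ := hu'
  set β := 1 - α with hβ
  have hα0 : 0 ≤ α := hα.1
  have hβ0 : 0 ≤ β := by simp [hβ]; linarith [hα.2]
  -- integrability of u, u' on [0,1]
  have hIu : IntegrableOn u (Icc (0:ℝ) 1) := by
    have := hL2.mono_exponent (q := 2) (p := 1) (by norm_num)
    exact memLp_one_iff_integrable.mp this
  have hIu' : IntegrableOn u' (Icc (0:ℝ) 1) := by
    have := hL2'.mono_exponent (q := 2) (p := 1) (by norm_num)
    exact memLp_one_iff_integrable.mp this
  obtain ⟨-, -, hlin⟩ := iter_combo hIu hIu' α β m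
  -- zfun linearity on [0,1]
  have hz : ∀ t ∈ Icc (0:ℝ) 1,
      zfun m (fun s => α * u s + β * u' s) (α • x0 + β • x0') t
        = α * zfun m u x0 t + β * zfun m u' x0' t := by
    intro t ht
    simp only [zfun, DmInv, hlin t ht, PiLp.add_apply, PiLp.smul_apply, smul_eq_mul]
    have hs : ∑ j : Fin m, (α * x0 j + β * x0' j) * t ^ (j:ℕ) / ((j:ℕ).factorial : ℝ)
        = (∑ j : Fin m, α * (x0 j * t ^ (j:ℕ) / ((j:ℕ).factorial : ℝ)))
          + ∑ j : Fin m, β * (x0' j * t ^ (j:ℕ) / ((j:ℕ).factorial : ℝ)) := by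
      rw [← Finset.sum_add_distrib]
      exact Finset.sum_congr rfl fun j _ => by ring
    rw [hs, ← Finset.mul_sum, ← Finset.mul_sum]
    ring
  -- the exceptional set
  set S := Icc (0:ℝ) 1 \ Nset m f0 with hSdef
  have hScont : Continuous (iteratedDeriv m f0) :=
    hf0.continuous_iteratedDeriv m (by exact_mod_cast Nat.le_mul_of_pos_left m (by norm_num))
  have hNmeas : MeasurableSet (Nset m f0) := by
    have : Nset m f0 = Icc (0:ℝ) 1 ∩ (iteratedDeriv m f0) ⁻¹' {0} := by
      ext s; simp [Nset, And.comm]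
    rw [this]
    exact measurableSet_Icc.inter (hScont.measurable (measurableSet_singleton 0))
  have hSmeas : MeasurableSet S := measurableSet_Icc.diff hNmeas
  -- quotient linearity & lower bound on S
  have hq : ∀ t ∈ S,
      zfun m (fun s => α * u s + β * u' s) (α • x0 + β • x0') t / iteratedDeriv m f0 t
        = α * (zfun m u x0 t / iteratedDeriv m f0 t)
          + β * (zfun m u' x0' t / iteratedDeriv m f0 t) := by
    intro t ht
    rw [hz t ht.1, add_div, mul_div_assoc, mul_div_assoc]
  have hεle : ∀ t ∈ S, ε ≤
      zfun m (fun s => α * u s + β * u' s) (α • x0 + β • x0') t / iteratedDeriv m f0 t := by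
    intro t ht
    rw [hq t ht]
    calc ε = α * ε + β * ε := by rw [hβ]; ring
    _ ≤ _ := add_le_add (mul_le_mul_of_nonneg_left (hge t ht) hα0)
        (mul_le_mul_of_nonneg_left (hge' t ht) hβ0)
  refine ⟨?_, ?_, ?_, ?_⟩
  · exact (hL2.const_mul α).add (hL2'.const_mul β)
  · calc ‖α • x0 + β • x0'‖ ≤ ‖α • x0‖ + ‖β • x0'‖ := norm_add_le _ _
      _ = α * ‖x0‖ + β * ‖x0'‖ := by
          rw [norm_smul, norm_smul, Real.norm_of_nonneg hα0, Real.norm_of_nonneg hβ0]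
      _ ≤ α * μ + β * μ := add_le_add (mul_le_mul_of_nonneg_left hnorm hα0)
          (mul_le_mul_of_nonneg_left hnorm' hβ0)
      _ = μ := by rw [hβ]; ring
  · exact hεle
  · -- integrability of the rpow of the combo
    set p : ℝ := -(1:ℝ) / (2 * m) with hp
    have hp0 : p ≤ 0 := by
      apply div_nonpos_of_nonpos_of_nonneg
      · norm_num
      · positivity
    set g : ℝ → ℝ := fun t => zfun m u x0 t / iteratedDeriv m f0 t with hgdef
    set g' : ℝ → ℝ := fun t => zfun m u' x0' t / iteratedDeriv m f0 t with hg'def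
    set G : ℝ → ℝ := fun t =>
      zfun m (fun s => α * u s + β * u' s) (α • x0 + β • x0') t / iteratedDeriv m f0 t
    have hpne : p ≠ 0 := by
      rw [hp]
      have : (0:ℝ) < 2 * m := by positivity
      intro h
      rw [div_eq_zero_iff] at h
      rcases h with h | h <;> [norm_num at h; linarith]
    have haeS := ae_restrict_mem (μ := volume) hSmeas
    -- g, g' a.e. measurable on S
    have hgm : AEMeasurable g (volume.restrict S) := by
      have h1 : AEMeasurable (fun t => g t ^ p) (volume.restrict S) :=
        hint.aemeasurable
      have h2 : AEMeasurable (fun t => (g t ^ p) ^ p⁻¹) (volume.restrict S) :=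
        h1.pow aemeasurable_const
      refine h2.congr (haeS.mono fun t ht => ?_)
      have hg0 : 0 < g t := lt_of_lt_of_le hε (hge t ht)
      show (g t ^ p) ^ p⁻¹ = g t
      rw [← Real.rpow_mul hg0.le, mul_inv_cancel₀ hpne, Real.rpow_one]
    have hg'm : AEMeasurable g' (volume.restrict S) := by
      have h1 : AEMeasurable (fun t => g' t ^ p) (volume.restrict S) :=
        hint'.aemeasurable
      have h2 : AEMeasurable (fun t => (g' t ^ p) ^ p⁻¹) (volume.restrict S) :=
        h1.pow aemeasurable_const
      refine h2.congr (haeS.mono fun t ht => ?_)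
      have hg0 : 0 < g' t := lt_of_lt_of_le hε (hge' t ht)
      show (g' t ^ p) ^ p⁻¹ = g' t
      rw [← Real.rpow_mul hg0.le, mul_inv_cancel₀ hpne, Real.rpow_one]
    have hGm : AEMeasurable G (volume.restrict S) := by
      refine ((hgm.const_mul α).add (hg'm.const_mul β)).congr (haeS.mono fun t ht => ?_)
      exact (hq t ht).symm
    have hGpm : AEStronglyMeasurable (fun t => G t ^ p) (volume.restrict S) :=
      (hGm.pow aemeasurable_const).aestronglyMeasurable
    -- domination
    have hbound : Integrable (fun t => g t ^ p + g' t ^ p) (volume.restrict S) :=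
      hint.add hint'
    refine hbound.mono' hGpm (haeS.mono fun t ht => ?_)
    have hg0 : 0 < g t := lt_of_lt_of_le hε (hge t ht)
    have hg0' : 0 < g' t := lt_of_lt_of_le hε (hge' t ht)
    have hG0 : 0 < G t := lt_of_lt_of_le hε (hεle t ht)
    rw [Real.norm_of_nonneg (Real.rpow_nonneg hG0.le p)]
    rcases le_total (g t) (g' t) with hc | hc
    · have hGge : g t ≤ G t := by
        have hGt : α * g t + β * g' t ≤ G t := le_of_eq (hq t ht).symm
        have hab : α + β = 1 := by rw [hβ]; ring
        nlinarith [hGt, mul_le_mul_of_nonneg_left hc hβ0, hab]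
      calc G t ^ p ≤ g t ^ p := Real.rpow_le_rpow_of_nonpos hg0 hGge hp0
        _ ≤ g t ^ p + g' t ^ p := le_add_of_nonneg_right (Real.rpow_nonneg hg0'.le p)
    · have hGge : g' t ≤ G t := by
        have hGt : α * g t + β * g' t ≤ G t := le_of_eq (hq t ht).symm
        have hab : α + β = 1 := by rw [hβ]; ring
        nlinarith [hGt, mul_le_mul_of_nonneg_left hc hα0, hab]
      calc G t ^ p ≤ g' t ^ p := Real.rpow_le_rpow_of_nonpos hg0' hGge hp0
        _ ≤ g t ^ p + g' t ^ p := le_add_of_nonneg_left (Real.rpow_nonneg hg0.le p)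

end
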